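/- Assume 0 < ℓ₀ ≤ ℓ ≤ L ≤ ℓ₁, T > 4ℓ₁, and suppose u^L solves the wave equation u_{tt} = u_{xx} on (ℓ,L)×(ℓ,T-ℓ) with u^L(ℓ,t) = u^L(L,t) = 0 and energy bounded by M. If for some t ∈ [2ℓ, T-2ℓ] one has |u^L(0,t)| ≥ δ₀ where u^L(0,t) = -(1/2)∫_{t-ℓ}^{t+ℓ} u^L_x(ℓ,s) ds, then L - ℓ ≤ (ℓ₁/2)·(T + 2ℓ₁ - 4ℓ₀)·M/δ₀². -/

import Mathlib

open Real

set_option maxHeartbeats 1000000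

open MeasureTheory

noncomputable def pd1 (u : ℝ → ℝ → ℝ) (v : ℝ × ℝ) (p : ℝ × ℝ) : ℝ :=
  fderiv ℝ (Function.uncurry u) p v

noncomputable def pd2 (u : ℝ → ℝ → ℝ) (v w : ℝ × ℝ) (p : ℝ × ℝ) : ℝ :=
  fderiv ℝ (fderiv ℝ (Function.uncurry u)) p v w

section
variable {u : ℝ → ℝ → ℝ}

lemma curve_snd (x s : ℝ) : HasDerivAt (fun s' : ℝ => (x, s')) ((0:ℝ),(1:ℝ)) s :=
  (hasDerivAt_const s x).prodMk (hasDerivAt_id s)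

lemma curve_fst (x s : ℝ) : HasDerivAt (fun y : ℝ => (y, s)) ((1:ℝ),(0:ℝ)) x :=
  (hasDerivAt_id x).prodMk (hasDerivAt_const x s)

lemma hasDerivAt_ut (hreg : ContDiff ℝ 2 (Function.uncurry u)) (x s : ℝ) :
    HasDerivAt (fun s' => u x s') (pd1 u (0,1) (x,s)) s := by
  have hd : DifferentiableAt ℝ (Function.uncurry u) (x, s) :=
    (hreg.differentiable (by norm_num)).differentiableAt
  exact hd.hasFDerivAt.comp_hasDerivAt s (curve_snd x s)

lemma hasDerivAt_ux (hreg : ContDiff ℝ 2 (Function.uncurry u)) (x s : ℝ) :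
    HasDerivAt (fun y => u y s) (pd1 u (1,0) (x,s)) x := by
  have hd : DifferentiableAt ℝ (Function.uncurry u) (x, s) :=
    (hreg.differentiable (by norm_num)).differentiableAt
  exact hd.hasFDerivAt.comp_hasDerivAt x (curve_fst x s)

lemma deriv_ut (hreg : ContDiff ℝ 2 (Function.uncurry u)) (x s : ℝ) : deriv (fun s' => u x s') s = pd1 u (0,1) (x,s) :=
  (hasDerivAt_ut hreg x s).deriv

lemma deriv_ux (hreg : ContDiff ℝ 2 (Function.uncurry u)) (x s : ℝ) : deriv (fun y => u y s) x = pd1 u (1,0) (x,s) :=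
  (hasDerivAt_ux hreg x s).deriv

lemma contDiff_pd1 (hreg : ContDiff ℝ 2 (Function.uncurry u)) (v : ℝ × ℝ) : ContDiff ℝ 1 (pd1 u v) :=
  (ContinuousLinearMap.apply ℝ ℝ v).contDiff.comp
    (hreg.fderiv_right (by norm_num))

lemma hasFDerivAt_pd1 (hreg : ContDiff ℝ 2 (Function.uncurry u)) (v : ℝ × ℝ) (p : ℝ × ℝ) :
    HasFDerivAt (pd1 u v)
      ((ContinuousLinearMap.apply ℝ ℝ v).comp
        (fderiv ℝ (fderiv ℝ (Function.uncurry u)) p)) p := by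
  have h1 : DifferentiableAt ℝ (fderiv ℝ (Function.uncurry u)) p :=
    ((hreg.fderiv_right (n := 2) (m := 1) (by norm_num)).differentiable
      (by norm_num)).differentiableAt
  exact (ContinuousLinearMap.apply ℝ ℝ v).hasFDerivAt.comp p h1.hasFDerivAt

lemma hasDerivAt_pd1_snd (hreg : ContDiff ℝ 2 (Function.uncurry u)) (v : ℝ × ℝ) (x s : ℝ) :
    HasDerivAt (fun s' => pd1 u v (x, s')) (pd2 u (0,1) v (x,s)) s :=
  (hasFDerivAt_pd1 hreg v (x,s)).comp_hasDerivAt s (curve_snd x s)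

lemma hasDerivAt_pd1_fst (hreg : ContDiff ℝ 2 (Function.uncurry u)) (v : ℝ × ℝ) (x s : ℝ) :
    HasDerivAt (fun y => pd1 u v (y, s)) (pd2 u (1,0) v (x,s)) x :=
  by have := (hasFDerivAt_pd1 hreg v (x,s)).comp_hasDerivAt x (curve_fst x s); exact this

lemma pd2_symm (hreg : ContDiff ℝ 2 (Function.uncurry u)) (v w : ℝ × ℝ) (p : ℝ × ℝ) : pd2 u v w p = pd2 u w v p := by
  have h := (hreg.contDiffAt (x := p)).isSymmSndFDerivAt (by norm_num)
  exact (h w v).symm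

lemma continuous_pd2 (hreg : ContDiff ℝ 2 (Function.uncurry u)) (v w : ℝ × ℝ) : Continuous (pd2 u v w) := by
  have h1 : ContDiff ℝ 1 (fderiv ℝ (Function.uncurry u)) :=
    hreg.fderiv_right (by norm_num)
  have h2 : Continuous (fderiv ℝ (fderiv ℝ (Function.uncurry u))) :=
    (h1.fderiv_right (n:=1) (m:=0) (by norm_num)).continuous
  have : Continuous fun p => (fderiv ℝ (fderiv ℝ (Function.uncurry u)) p) v w := by
    fun_prop
  exact this

end

section helpers
variable {u : ℝ → ℝ → ℝ}

lemma cont_slice_snd {g : ℝ × ℝ → ℝ} (h : Continuous g) (x : ℝ) :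
    Continuous fun s => g (x, s) := h.comp (continuous_const.prodMk continuous_id)

lemma cont_slice_fst {g : ℝ × ℝ → ℝ} (h : Continuous g) (s : ℝ) :
    Continuous fun x => g (x, s) := h.comp (continuous_id.prodMk continuous_const)

lemma contP (hreg : ContDiff ℝ 2 (Function.uncurry u)) :
    Continuous (fun p : ℝ × ℝ => pd2 u (0,1) (0,1) p * pd1 u (1,0) p
      + pd1 u (0,1) p * pd2 u (0,1) (1,0) p) :=
  ((continuous_pd2 hreg _ _).mul (contDiff_pd1 hreg _).continuous).add
    ((contDiff_pd1 hreg _).continuous.mul (continuous_pd2 hreg _ _))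

lemma contQ (hreg : ContDiff ℝ 2 (Function.uncurry u)) :
    Continuous (fun p : ℝ × ℝ => pd1 u (0,1) p * pd2 u (1,0) (0,1) p
      + pd1 u (1,0) p * pd2 u (1,0) (1,0) p) :=
  ((contDiff_pd1 hreg _).continuous.mul (continuous_pd2 hreg _ _)).add
    ((contDiff_pd1 hreg _).continuous.mul (continuous_pd2 hreg _ _))

lemma contE (hreg : ContDiff ℝ 2 (Function.uncurry u)) :
    Continuous (fun p : ℝ × ℝ => (pd1 u (0,1) p) ^ 2 + (pd1 u (1,0) p) ^ 2) :=
  ((contDiff_pd1 hreg _).continuous.pow 2).add ((contDiff_pd1 hreg _).continuous.pow 2)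

/-- FTC in time for the flux density `φ = u_t u_x`. -/
lemma stepA (hreg : ContDiff ℝ 2 (Function.uncurry u)) (x a b : ℝ) :
    pd1 u (0,1) (x,b) * pd1 u (1,0) (x,b) - pd1 u (0,1) (x,a) * pd1 u (1,0) (x,a)
      = ∫ s in a..b, (pd2 u (0,1) (0,1) (x,s) * pd1 u (1,0) (x,s)
          + pd1 u (0,1) (x,s) * pd2 u (0,1) (1,0) (x,s)) := by
  refine (intervalIntegral.integral_eq_sub_of_hasDerivAt
    (f := fun s' => pd1 u (0,1) (x,s') * pd1 u (1,0) (x,s')) (fun s _ => ?_) ?_).symm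
  · exact (hasDerivAt_pd1_snd hreg (0,1) x s).mul (hasDerivAt_pd1_snd hreg (1,0) x s)
  · exact (cont_slice_snd (contP hreg) x).intervalIntegrable _ _

/-- Integration by parts in space with multiplier `L - x`. -/
lemma stepC2 (hreg : ContDiff ℝ 2 (Function.uncurry u)) (ℓ L s : ℝ) :
    (∫ x in ℓ..L, (L - x) * (pd1 u (0,1) (x,s) * pd2 u (1,0) (0,1) (x,s)
        + pd1 u (1,0) (x,s) * pd2 u (1,0) (1,0) (x,s)))
      = -((L - ℓ) * (((pd1 u (0,1) (ℓ,s)) ^ 2 + (pd1 u (1,0) (ℓ,s)) ^ 2) / 2))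
        + ∫ x in ℓ..L, ((pd1 u (0,1) (x,s)) ^ 2 + (pd1 u (1,0) (x,s)) ^ 2) / 2 := by
  have hder : ∀ x ∈ Set.uIcc ℓ L, HasDerivAt
      (fun y => ((pd1 u (0,1) (y,s)) ^ 2 + (pd1 u (1,0) (y,s)) ^ 2) / 2)
      (pd1 u (0,1) (x,s) * pd2 u (1,0) (0,1) (x,s)
        + pd1 u (1,0) (x,s) * pd2 u (1,0) (1,0) (x,s)) x := by
    intro x _
    have h := (((hasDerivAt_pd1_fst hreg (0,1) x s).fun_pow 2).fun_add
      ((hasDerivAt_pd1_fst hreg (1,0) x s).fun_pow 2)).div_const 2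
    refine h.congr_deriv ?_
    ring
  have hu : ∀ x ∈ Set.uIcc ℓ L, HasDerivAt (fun y => L - y) (-1) x := by
    intro x _
    simpa using ((hasDerivAt_id x).const_sub L)
  have := intervalIntegral.integral_mul_deriv_eq_deriv_mul hu hder
    ((continuous_const.intervalIntegrable ℓ L))
    ((cont_slice_fst (contQ hreg) s).intervalIntegrable ℓ L)
  rw [this]
  have : (∫ x in ℓ..L, (-1 : ℝ) *
      (((pd1 u (0,1) (x,s)) ^ 2 + (pd1 u (1,0) (x,s)) ^ 2) / 2))
      = -∫ x in ℓ..L, ((pd1 u (0,1) (x,s)) ^ 2 + (pd1 u (1,0) (x,s)) ^ 2) / 2 := by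
    rw [← intervalIntegral.integral_neg]
    congr 1
    ext x
    ring
  rw [this]
  ring

/-- Fubini on a box for a continuous integrand. -/
lemma fubini_box {F : ℝ → ℝ → ℝ} (hF : Continuous (Function.uncurry F))
    {p q r w : ℝ} (h1 : p ≤ q) (h2 : r ≤ w) :
    (∫ x in p..q, ∫ s in r..w, F x s) = ∫ s in r..w, ∫ x in p..q, F x s := by
  have hint : MeasureTheory.IntegrableOn (Function.uncurry F)
      (Set.Ioc p q ×ˢ Set.Ioc r w) (volume.prod volume) := by
    refine ((hF.continuousOn.integrableOn_compact (isCompact_Icc.prod isCompact_Icc)).mono_set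
      (Set.prod_mono Set.Ioc_subset_Icc_self Set.Ioc_subset_Icc_self))
  simp only [intervalIntegral.integral_of_le h1, intervalIntegral.integral_of_le h2]
  refine MeasureTheory.integral_integral_swap ?_
  rw [MeasureTheory.Measure.prod_restrict]
  exact hint

end helpers

/-- Cauchy–Schwarz for interval integrals of continuous functions. -/
lemma cs_interval {g : ℝ → ℝ} (hg : Continuous g) {a b : ℝ} (hab : a ≤ b) :
    (∫ s in a..b, g s) ^ 2 ≤ (b - a) * ∫ s in a..b, (g s) ^ 2 := by
  set μ := MeasureTheory.volume.restrict (Set.Ioc a b) with hμ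
  have hfin : MeasureTheory.IsFiniteMeasure μ := by
    constructor
    rw [hμ, MeasureTheory.Measure.restrict_apply_univ, Real.volume_Ioc]
    exact ENNReal.ofReal_lt_top
  obtain ⟨C, hC⟩ : ∃ C, ∀ x ∈ Set.Icc a b, ‖g x‖ ≤ C :=
    isCompact_Icc.exists_bound_of_continuousOn hg.continuousOn
  have hmem : MeasureTheory.MemLp (fun s => |g s|) (ENNReal.ofReal 2) μ := by
    refine MeasureTheory.MemLp.of_bound hg.abs.aestronglyMeasurable C ?_
    refine (MeasureTheory.ae_restrict_iff' measurableSet_Ioc).2 ?_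
    filter_upwards with x hx
    simpa [abs_abs] using hC x (Set.Ioc_subset_Icc_self hx)
  have hmem1 : MeasureTheory.MemLp (fun _ : ℝ => (1 : ℝ)) (ENNReal.ofReal 2) μ :=
    MeasureTheory.memLp_const 1
  have hconj : Real.HolderConjugate 2 2 := Real.HolderConjugate.two_two
  have hH := MeasureTheory.integral_mul_le_Lp_mul_Lq_of_nonneg hconj
    (f := fun s => |g s|) (g := fun _ => (1:ℝ)) (μ := μ)
    (Filter.Eventually.of_forall fun x => abs_nonneg _)
    (Filter.Eventually.of_forall fun x => zero_le_one) hmem hmem1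
  simp only [mul_one] at hH
  have h2 : ∫ s, |g s| ^ (2:ℝ) ∂μ = ∫ s, (g s) ^ 2 ∂μ := by
    refine MeasureTheory.integral_congr_ae (Filter.Eventually.of_forall fun x => ?_)
    show |g x| ^ (2:ℝ) = (g x) ^ 2
    rw [Real.rpow_two, sq_abs]
  have h3 : ∫ _ : ℝ, (1:ℝ) ^ (2:ℝ) ∂μ = b - a := by
    simp [Real.one_rpow, hμ, Real.volume_Ioc, ENNReal.toReal_ofReal (by linarith : (0:ℝ) ≤ b - a), hab]
  rw [h2, h3] at hH
  have hA : 0 ≤ ∫ s, (g s) ^ 2 ∂μ :=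
    MeasureTheory.integral_nonneg fun x => sq_nonneg _
  have hB : (0:ℝ) ≤ b - a := by linarith
  have habs : |∫ s in a..b, g s| ≤ ∫ s in a..b, |g s| :=
    intervalIntegral.abs_integral_le_integral_abs hab
  have hiq : (∫ s in a..b, g s) ^ 2 ≤ (∫ s in a..b, |g s|) ^ 2 := by
    rw [← sq_abs]
    refine pow_le_pow_left₀ (abs_nonneg _) habs 2
  refine hiq.trans ?_
  have hieq : (∫ s in a..b, |g s|) = ∫ s, |g s| ∂μ := intervalIntegral.integral_of_le hab
  have hieq2 : (∫ s in a..b, (g s) ^ 2) = ∫ s, (g s) ^ 2 ∂μ := intervalIntegral.integral_of_le hab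
  rw [hieq, hieq2]
  calc (∫ s, |g s| ∂μ) ^ 2
      ≤ ((∫ s, (g s) ^ 2 ∂μ) ^ ((1:ℝ)/2) * (b - a) ^ ((1:ℝ)/2)) ^ 2 := by
        refine pow_le_pow_left₀ (MeasureTheory.integral_nonneg fun x => abs_nonneg _) hH 2
    _ = (b - a) * ∫ s, (g s) ^ 2 ∂μ := by
        rw [mul_pow, ← Real.rpow_natCast ((∫ s, (g s) ^ 2 ∂μ) ^ ((1:ℝ)/2)) 2,
          ← Real.rpow_natCast ((b - a) ^ ((1:ℝ)/2)) 2,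
          ← Real.rpow_mul hA, ← Real.rpow_mul hB]
        norm_num
        try rw [Real.rpow_one, Real.rpow_one]
        ring

noncomputable def EE (u : ℝ → ℝ → ℝ) (ℓ L s : ℝ) : ℝ :=
  ∫ x in ℓ..L, ((pd1 u (0,1) (x,s)) ^ 2 + (pd1 u (1,0) (x,s)) ^ 2)

noncomputable def GG (u : ℝ → ℝ → ℝ) (ℓ L s : ℝ) : ℝ :=
  ∫ x in ℓ..L, (L - x) * (pd1 u (0,1) (x,s) * pd1 u (1,0) (x,s))

lemma contEE {u : ℝ → ℝ → ℝ} (hreg : ContDiff ℝ 2 (Function.uncurry u)) (ℓ L : ℝ) :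
    Continuous (EE u ℓ L) := by
  have h : Continuous (Function.uncurry fun s x =>
      ((pd1 u (0,1) (x,s)) ^ 2 + (pd1 u (1,0) (x,s)) ^ 2)) :=
    (contE hreg).comp (continuous_snd.prodMk continuous_fst)
  exact intervalIntegral.continuous_parametric_intervalIntegral_of_continuous' h ℓ L

/-- The multiplier/energy-flux identity: hidden regularity at `x = ℓ`. -/
lemma key_identity {u : ℝ → ℝ → ℝ} (hreg : ContDiff ℝ 2 (Function.uncurry u))
    {ℓ L T a b : ℝ} (hlL : ℓ ≤ L) (hab : a ≤ b) (haℓ : ℓ ≤ a) (hbT : b ≤ T - ℓ)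
    (hPDE : ∀ x s : ℝ, ℓ < x → x < L → ℓ < s → s < T - ℓ →
      pd2 u (0,1) (0,1) (x,s) = pd2 u (1,0) (1,0) (x,s))
    (hut0 : ∀ s : ℝ, ℓ < s → s < T - ℓ → pd1 u (0,1) (ℓ, s) = 0) :
    GG u ℓ L b - GG u ℓ L a
      = ∫ s in a..b, (EE u ℓ L s / 2 - (L - ℓ) * (pd1 u (1,0) (ℓ,s)) ^ 2 / 2) := by
  have hGc : Continuous (fun p : ℝ × ℝ => (L - p.1) *
      (pd1 u (0,1) p * pd1 u (1,0) p)) :=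
    (continuous_const.sub continuous_fst).mul
      ((contDiff_pd1 hreg _).continuous.mul (contDiff_pd1 hreg _).continuous)
  have hPc : Continuous (fun p : ℝ × ℝ => (L - p.1) *
      (pd2 u (0,1) (0,1) p * pd1 u (1,0) p + pd1 u (0,1) p * pd2 u (0,1) (1,0) p)) :=
    (continuous_const.sub continuous_fst).mul (contP hreg)
  -- Step D + A: G b - G a as double integral
  have hGdiff : GG u ℓ L b - GG u ℓ L a
      = ∫ x in ℓ..L, ∫ s in a..b, (L - x) *
          (pd2 u (0,1) (0,1) (x,s) * pd1 u (1,0) (x,s)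
            + pd1 u (0,1) (x,s) * pd2 u (0,1) (1,0) (x,s)) := by
    unfold GG
    rw [← intervalIntegral.integral_sub
      ((cont_slice_fst hGc b).intervalIntegrable ℓ L)
      ((cont_slice_fst hGc a).intervalIntegrable ℓ L)]
    refine intervalIntegral.integral_congr fun x _ => ?_
    rw [intervalIntegral.integral_const_mul, ← stepA hreg x a b]
    dsimp only
    ring
  -- Fubini
  have hFub : (∫ x in ℓ..L, ∫ s in a..b, (L - x) *
        (pd2 u (0,1) (0,1) (x,s) * pd1 u (1,0) (x,s)
          + pd1 u (0,1) (x,s) * pd2 u (0,1) (1,0) (x,s)))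
      = ∫ s in a..b, ∫ x in ℓ..L, (L - x) *
        (pd2 u (0,1) (0,1) (x,s) * pd1 u (1,0) (x,s)
          + pd1 u (0,1) (x,s) * pd2 u (0,1) (1,0) (x,s)) :=
    fubini_box (F := fun x s => (L - x) *
        (pd2 u (0,1) (0,1) (x,s) * pd1 u (1,0) (x,s)
          + pd1 u (0,1) (x,s) * pd2 u (0,1) (1,0) (x,s))) (by exact hPc) hlL hab
  -- inner integral for interior times
  have hinner : ∀ s ∈ Set.Ioo a b,
      (∫ x in ℓ..L, (L - x) *
        (pd2 u (0,1) (0,1) (x,s) * pd1 u (1,0) (x,s)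
          + pd1 u (0,1) (x,s) * pd2 u (0,1) (1,0) (x,s)))
      = EE u ℓ L s / 2 - (L - ℓ) * (pd1 u (1,0) (ℓ,s)) ^ 2 / 2 := by
    intro s hs
    have hs1 : ℓ < s := lt_of_le_of_lt haℓ hs.1
    have hs2 : s < T - ℓ := lt_of_lt_of_le hs.2 hbT
    have hcongr : (∫ x in ℓ..L, (L - x) *
          (pd2 u (0,1) (0,1) (x,s) * pd1 u (1,0) (x,s)
            + pd1 u (0,1) (x,s) * pd2 u (0,1) (1,0) (x,s)))
        = ∫ x in ℓ..L, (L - x) *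
          (pd1 u (0,1) (x,s) * pd2 u (1,0) (0,1) (x,s)
            + pd1 u (1,0) (x,s) * pd2 u (1,0) (1,0) (x,s)) := by
      rw [intervalIntegral.integral_of_le hlL, intervalIntegral.integral_of_le hlL,
        MeasureTheory.integral_Ioc_eq_integral_Ioo,
        MeasureTheory.integral_Ioc_eq_integral_Ioo]
      refine MeasureTheory.setIntegral_congr_fun measurableSet_Ioo fun x hx => ?_
      have h1 := hPDE x s hx.1 hx.2 hs1 hs2
      have h2 := pd2_symm hreg (0,1) (1,0) (x,s)
      show (L - x) * _ = (L - x) * _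
      rw [h1, h2]
      ring
    rw [hcongr, stepC2 hreg ℓ L s, hut0 s hs1 hs2]
    have hEdiv : (∫ x in ℓ..L,
        ((pd1 u (0,1) (x,s)) ^ 2 + (pd1 u (1,0) (x,s)) ^ 2) / 2)
        = EE u ℓ L s / 2 := by
      rw [EE, intervalIntegral.integral_div]
    rw [hEdiv]
    ring
  -- outer congruence
  rw [hGdiff, hFub]
  rw [intervalIntegral.integral_of_le hab, intervalIntegral.integral_of_le hab,
    MeasureTheory.integral_Ioc_eq_integral_Ioo, MeasureTheory.integral_Ioc_eq_integral_Ioo]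
  exact MeasureTheory.setIntegral_congr_fun measurableSet_Ioo hinner

/-- Quantitative core of Theorem 3.4 for the wave equation: if `u = u^L` solves the
wave equation on `(ℓ,L) × (ℓ,T-ℓ)` with zero Dirichlet data at `x = ℓ, L`, has energy
bounded by `M`, and at some time `t ∈ [2ℓ, T-2ℓ]` the d'Alembert trace
`u(0,t) = -(1/2)∫_{t-ℓ}^{t+ℓ} u_x(ℓ,s) ds` satisfies `|u(0,t)| ≥ δ₀ > 0`, then
`L - ℓ ≤ (ℓ₁/2)(T + 2ℓ₁ - 4ℓ₀) M / δ₀²`. -/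
theorem stmt_13 (ℓ₀ ℓ L ℓ₁ T M δ₀ : ℝ)
    (h₀ : 0 < ℓ₀) (h₁ : ℓ₀ ≤ ℓ) (h₂ : ℓ ≤ L) (h₃ : L ≤ ℓ₁) (hT : 4 * ℓ₁ < T)
    (hδ₀ : 0 < δ₀)
    (u : ℝ → ℝ → ℝ) (hreg : ContDiff ℝ 2 (Function.uncurry u))
    (heq : ∀ x t : ℝ, ℓ < x → x < L → ℓ < t → t < T - ℓ →
      deriv (fun τ => deriv (fun τ' => u x τ') τ) t =
      deriv (fun y => deriv (fun y' => u y' t) y) x)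
    (hbc : ∀ t : ℝ, ℓ < t → t < T - ℓ → u ℓ t = 0 ∧ u L t = 0)
    (henergy : ∀ t : ℝ, ℓ ≤ t → t ≤ T - ℓ →
      (∫ x in ℓ..L,
        ((deriv (fun τ => u x τ) t) ^ 2 + (deriv (fun y => u y t) x) ^ 2)) ≤ M)
    (t : ℝ) (ht₁ : 2 * ℓ ≤ t) (ht₂ : t ≤ T - 2 * ℓ)
    (hdalembert : u 0 t =
      -(1 / 2) * ∫ s in (t - ℓ)..(t + ℓ), deriv (fun y => u y s) ℓ)
    (hbig : δ₀ ≤ |u 0 t|) :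
    L - ℓ ≤ ℓ₁ / 2 * (T + 2 * ℓ₁ - 4 * ℓ₀) * M / δ₀ ^ 2 := by
  have hl0 : 0 < ℓ := lt_of_lt_of_le h₀ h₁
  have hl1 : 0 < ℓ₁ := by linarith
  -- rewrite derivatives into pd1 form
  have henergy' : ∀ s : ℝ, ℓ ≤ s → s ≤ T - ℓ → EE u ℓ L s ≤ M := by
    intro s hs1 hs2
    have h := henergy s hs1 hs2
    unfold EE
    have e : ∀ x : ℝ, (deriv (fun τ => u x τ) s) ^ 2 + (deriv (fun y => u y s) x) ^ 2
        = (pd1 u (0,1) (x,s)) ^ 2 + (pd1 u (1,0) (x,s)) ^ 2 := fun x => by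
      rw [deriv_ut hreg, deriv_ux hreg]
    rwa [intervalIntegral.integral_congr (fun x _ => e x)] at h
  have hM : 0 ≤ M := by
    refine le_trans ?_ (henergy' ℓ le_rfl (by linarith))
    unfold EE
    exact intervalIntegral.integral_nonneg h₂ (fun x _ => by positivity)
  rcases eq_or_lt_of_le h₂ with hL | hlL
  · rw [← hL]
    simp only [sub_self]
    apply div_nonneg _ (by positivity)
    have h5 : (0:ℝ) ≤ T + 2 * ℓ₁ - 4 * ℓ₀ := by linarith
    have h6 : (0:ℝ) ≤ ℓ₁ / 2 := by linarith
    exact mul_nonneg (mul_nonneg h6 h5) hM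
  -- main case
  set a := t - ℓ with ha_def
  set b := t + ℓ with hb_def
  have hab : a ≤ b := by rw [ha_def, hb_def]; linarith
  have haℓ : ℓ ≤ a := by rw [ha_def]; linarith
  have hbT : b ≤ T - ℓ := by rw [hb_def]; linarith
  -- PDE in pd2 form
  have hPDE : ∀ x s : ℝ, ℓ < x → x < L → ℓ < s → s < T - ℓ →
      pd2 u (0,1) (0,1) (x,s) = pd2 u (1,0) (1,0) (x,s) := by
    intro x s hx1 hx2 hs1 hs2
    have h := heq x s hx1 hx2 hs1 hs2
    have e1 : (fun τ => deriv (fun τ' => u x τ') τ) = fun τ => pd1 u (0,1) (x,τ) :=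
      funext fun τ => deriv_ut hreg x τ
    have e2 : (fun y => deriv (fun y' => u y' s) y) = fun y => pd1 u (1,0) (y,s) :=
      funext fun y => deriv_ux hreg y s
    rw [e1, e2] at h
    rwa [(hasDerivAt_pd1_snd hreg (0,1) x s).deriv,
      (hasDerivAt_pd1_fst hreg (1,0) x s).deriv] at h
  -- boundary condition in pd1 form
  have hut0 : ∀ s : ℝ, ℓ < s → s < T - ℓ → pd1 u (0,1) (ℓ, s) = 0 := by
    intro s hs1 hs2
    rw [← deriv_ut hreg ℓ s]
    have hev : (fun s' => u ℓ s') =ᶠ[nhds s] (fun _ => (0:ℝ)) := by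
      filter_upwards [Ioo_mem_nhds hs1 hs2] with r hr
      exact (hbc r hr.1 hr.2).1
    rw [hev.deriv_eq]
    simp
  have hKEY := key_identity hreg h₂ hab haℓ hbT hPDE hut0
  -- continuity facts
  have hgcont : Continuous fun s => pd1 u (1,0) (ℓ, s) :=
    cont_slice_snd (contDiff_pd1 hreg _).continuous ℓ
  have hEcont : Continuous (EE u ℓ L) := contEE hreg ℓ L
  set I := ∫ s in a..b, (pd1 u (1,0) (ℓ,s)) ^ 2 with hI_def
  have hInn : 0 ≤ I :=
    intervalIntegral.integral_nonneg hab (fun s _ => sq_nonneg _)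
  -- split the RHS of the key identity
  have hsplit : (∫ s in a..b, (EE u ℓ L s / 2 - (L - ℓ) * (pd1 u (1,0) (ℓ,s)) ^ 2 / 2))
      = (∫ s in a..b, EE u ℓ L s) / 2 - (L - ℓ) * I / 2 := by
    rw [intervalIntegral.integral_sub
      ((hEcont.div_const 2).intervalIntegrable a b)
      ((show Continuous fun s => (L - ℓ) * (pd1 u (1,0) (ℓ,s)) ^ 2 / 2 from (continuous_const.mul (hgcont.pow 2)).div_const 2).intervalIntegrable a b),
      intervalIntegral.integral_div]
    congr 1
    rw [hI_def, ← intervalIntegral.integral_const_mul, ← intervalIntegral.integral_div]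
  -- energy integral bound
  have hEbound : (∫ s in a..b, EE u ℓ L s) ≤ 2 * ℓ * M := by
    have h := intervalIntegral.integral_mono_on hab
      (hEcont.intervalIntegrable a b) (_root_.intervalIntegrable_const (μ := MeasureTheory.volume) (c := M))
      (fun s hs => henergy' s (le_trans haℓ hs.1) (le_trans hs.2 hbT))
    rw [intervalIntegral.integral_const, smul_eq_mul] at h
    have hba : b - a = 2 * ℓ := by rw [ha_def, hb_def]; ring
    rwa [hba] at h
  -- bounds on GG at a and b
  have hGbnd : ∀ s : ℝ, ℓ ≤ s → s ≤ T - ℓ → |GG u ℓ L s| ≤ (L - ℓ) / 2 * M := by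
    intro s hs1 hs2
    have habs : |GG u ℓ L s| ≤ ∫ x in ℓ..L,
        |(L - x) * (pd1 u (0,1) (x,s) * pd1 u (1,0) (x,s))| :=
      intervalIntegral.abs_integral_le_integral_abs h₂
    have hGc : Continuous fun x => (L - x) * (pd1 u (0,1) (x,s) * pd1 u (1,0) (x,s)) :=
      (continuous_const.sub continuous_id).mul
        ((cont_slice_fst (contDiff_pd1 hreg _).continuous s).mul
          (cont_slice_fst (contDiff_pd1 hreg _).continuous s))
    have hmono : (∫ x in ℓ..L,
        |(L - x) * (pd1 u (0,1) (x,s) * pd1 u (1,0) (x,s))|)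
        ≤ ∫ x in ℓ..L, (L - ℓ) / 2 * ((pd1 u (0,1) (x,s)) ^ 2 + (pd1 u (1,0) (x,s)) ^ 2) := by
      refine intervalIntegral.integral_mono_on h₂ (hGc.abs.intervalIntegrable ℓ L)
        ((continuous_const.mul (cont_slice_fst (contE hreg) s)).intervalIntegrable ℓ L)
        (fun x hx => ?_)
      have e1 : |(L - x) * (pd1 u (0,1) (x,s) * pd1 u (1,0) (x,s))|
          = |L - x| * |pd1 u (0,1) (x,s) * pd1 u (1,0) (x,s)| := abs_mul _ _
      have e2 : |L - x| ≤ L - ℓ := by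
        rw [abs_of_nonneg (by linarith [hx.2] : (0:ℝ) ≤ L - x)]
        linarith [hx.1]
      have e3 : |pd1 u (0,1) (x,s) * pd1 u (1,0) (x,s)|
          ≤ ((pd1 u (0,1) (x,s)) ^ 2 + (pd1 u (1,0) (x,s)) ^ 2) / 2 := by
        rw [abs_mul]
        nlinarith [sq_nonneg (|pd1 u (0,1) (x,s)| - |pd1 u (1,0) (x,s)|),
          sq_abs (pd1 u (0,1) (x,s)), sq_abs (pd1 u (1,0) (x,s)),
          abs_nonneg (pd1 u (0,1) (x,s)), abs_nonneg (pd1 u (1,0) (x,s))]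
      calc |(L - x) * (pd1 u (0,1) (x,s) * pd1 u (1,0) (x,s))|
          = |L - x| * |pd1 u (0,1) (x,s) * pd1 u (1,0) (x,s)| := e1
        _ ≤ (L - ℓ) * (((pd1 u (0,1) (x,s)) ^ 2 + (pd1 u (1,0) (x,s)) ^ 2) / 2) := by
            refine mul_le_mul e2 e3 (abs_nonneg _) (by linarith)
        _ = (L - ℓ) / 2 * ((pd1 u (0,1) (x,s)) ^ 2 + (pd1 u (1,0) (x,s)) ^ 2) := by ring
    have hlast : (∫ x in ℓ..L,
        (L - ℓ) / 2 * ((pd1 u (0,1) (x,s)) ^ 2 + (pd1 u (1,0) (x,s)) ^ 2))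
        = (L - ℓ) / 2 * EE u ℓ L s := by
      rw [EE, intervalIntegral.integral_const_mul]
    have := henergy' s hs1 hs2
    calc |GG u ℓ L s| ≤ _ := habs
      _ ≤ _ := hmono
      _ = (L - ℓ) / 2 * EE u ℓ L s := hlast
      _ ≤ (L - ℓ) / 2 * M := by
          refine mul_le_mul_of_nonneg_left this (by linarith)
  have hGa := hGbnd a haℓ (le_trans hab hbT)
  have hGb := hGbnd b (le_trans haℓ hab) hbT
  -- the hidden regularity bound
  have hKEY2 : (L - ℓ) * I ≤ 2 * ℓ * M + 2 * (L - ℓ) * M := by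
    have h1 : GG u ℓ L b - GG u ℓ L a
        = (∫ s in a..b, EE u ℓ L s) / 2 - (L - ℓ) * I / 2 := by
      rw [hKEY, hsplit]
    have h2 : |GG u ℓ L a| ≤ (L - ℓ) / 2 * M := hGa
    have h3 : |GG u ℓ L b| ≤ (L - ℓ) / 2 * M := hGb
    have h4 := abs_le.1 h2
    have h5 := abs_le.1 h3
    linarith [hEbound]
  -- Cauchy–Schwarz on the d'Alembert formula
  have hCS : δ₀ ^ 2 ≤ ℓ / 2 * I := by
    have hJ : u 0 t = -(1/2) * ∫ s in a..b, pd1 u (1,0) (ℓ,s) := by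
      rw [hdalembert]
      congr 1
      exact intervalIntegral.integral_congr fun s _ => deriv_ux hreg ℓ s
    have hJ2 : (∫ s in a..b, pd1 u (1,0) (ℓ,s)) ^ 2 ≤ (b - a) * I :=
      cs_interval hgcont hab
    have hba : b - a = 2 * ℓ := by rw [ha_def, hb_def]; ring
    rw [hba] at hJ2
    have habs2 : δ₀ ^ 2 ≤ (u 0 t) ^ 2 := by
      have := sq_le_sq' (by linarith [abs_nonneg (u 0 t), neg_abs_le (u 0 t)] :
        -(|u 0 t|) ≤ δ₀) hbig
      calc δ₀ ^ 2 ≤ |u 0 t| ^ 2 := by nlinarith [abs_nonneg (u 0 t)]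
        _ = (u 0 t) ^ 2 := sq_abs _
    rw [hJ] at habs2
    nlinarith [habs2, hJ2]
  -- conclude
  rw [le_div_iff₀ (by positivity : (0:ℝ) < δ₀ ^ 2)]
  have c1 : (L - ℓ) * δ₀ ^ 2 ≤ (L - ℓ) * (ℓ / 2 * I) :=
    mul_le_mul_of_nonneg_left hCS (by linarith)
  have c3 : ℓ / 2 * ((L - ℓ) * I) ≤ ℓ / 2 * (2 * ℓ * M + 2 * (L - ℓ) * M) :=
    mul_le_mul_of_nonneg_left hKEY2 (by linarith)
  have c5 : ℓ * L * M ≤ ℓ₁ * ℓ₁ * M :=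
    mul_le_mul_of_nonneg_right
      (mul_le_mul (by linarith) (by linarith) (by linarith) (by linarith)) hM
  have c6 : ℓ₁ * ℓ₁ * M ≤ ℓ₁ / 2 * (T + 2 * ℓ₁ - 4 * ℓ₀) * M := by
    refine mul_le_mul_of_nonneg_right ?_ hM
    nlinarith [mul_nonneg (le_of_lt hl1) (by linarith : (0:ℝ) ≤ T - 4 * ℓ₀)]
  nlinarith [c1, c3, c5, c6]
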